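/- Let P ∈ ℝ^{m×m} be symmetric, S ∈ ℝ^{m×n}, and suppose P = XᵀΣX where X ∈ ℝ^{(n₁+n₂)×m} has full row rank and Σ = diag(I_{n₁}, −I_{n₂}). Then ν(P) ≥ rank(SᵀP) − π(SᵀPS), i.e., the number of negative eigenvalues of P is at least the rank of SᵀP minus the number of positive eigenvalues of SᵀPS. -/

import Mathlib

open Matrix

noncomputable def posEigen {m : ℕ} (M : Matrix (Fin m) (Fin m) ℝ) : ℕ :=
  if h : M.IsHermitian then (Finset.univ.filter fun i => 0 < h.eigenvalues i).card else 0

noncomputable def negEigen {m : ℕ} (M : Matrix (Fin m) (Fin m) ℝ) : ℕ :=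
  if h : M.IsHermitian then (Finset.univ.filter fun i => h.eigenvalues i < 0).card else 0

lemma pos_index_lemma {k : ℕ} (A : Matrix (Fin k) (Fin k) ℝ) (hA : A.IsHermitian)
    (U : Submodule ℝ (Fin k → ℝ))
    (hU : ∀ x ∈ U, x ≠ 0 → 0 < x ⬝ᵥ A.mulVec x) :
    Module.finrank ℝ U ≤ posEigen A := by
  classical
  set V : Matrix (Fin k) (Fin k) ℝ := (hA.eigenvectorUnitary : Matrix (Fin k) (Fin k) ℝ) with hV
  let g : U →ₗ[ℝ] ({i : Fin k // 0 < hA.eigenvalues i} → ℝ) :=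
    (LinearMap.funLeft ℝ ℝ Subtype.val).comp (((star V).mulVecLin).comp U.subtype)
  have hg : Function.Injective g := by
    rw [← LinearMap.ker_eq_bot, LinearMap.ker_eq_bot']
    rintro ⟨x, hx⟩ h0
    have hc : ∀ i : Fin k, 0 < hA.eigenvalues i → ((star V) *ᵥ x) i = 0 := by
      intro i hi
      have := congrFun h0 ⟨i, hi⟩
      simpa [g] using this
    by_contra hne
    have hx0 : x ≠ 0 := by
      intro h; exact hne (by simp [h])
    have hq : 0 < x ⬝ᵥ A.mulVec x := hU x hx hx0
    -- compute the quadratic form in the eigenbasis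
    have hqe : x ⬝ᵥ A.mulVec x
        = ∑ i, (((star V) *ᵥ x) i) * (hA.eigenvalues i * ((star V) *ᵥ x) i) := by
      conv_lhs => rw [hA.spectral_theorem, Unitary.conjStarAlgAut_apply]
      rw [← Matrix.mulVec_mulVec, ← Matrix.mulVec_mulVec, Matrix.dotProduct_mulVec]
      have hstar : (star V : Matrix (Fin k) (Fin k) ℝ) = Vᵀ := by
        simp [Matrix.star_eq_conjTranspose, Matrix.conjTranspose_eq_transpose_of_trivial]
      rw [hstar]
      rw [show (hA.eigenvectorUnitary : Matrix (Fin k) (Fin k) ℝ) = Vᵀᵀ from by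
        rw [Matrix.transpose_transpose], Matrix.vecMul_transpose]
      simp [dotProduct, Matrix.mulVec_diagonal, Function.comp]
    have hle : x ⬝ᵥ A.mulVec x ≤ 0 := by
      rw [hqe]
      apply Finset.sum_nonpos
      intro i _
      by_cases hi : 0 < hA.eigenvalues i
      · simp [hc i hi]
      · push_neg at hi
        have : hA.eigenvalues i * ((star V) *ᵥ x) i * ((star V) *ᵥ x) i ≤ 0 := by
          nlinarith [sq_nonneg (((star V) *ᵥ x) i)]
        nlinarith [this]
    linarith
  calc Module.finrank ℝ U ≤ Module.finrank ℝ ({i : Fin k // 0 < hA.eigenvalues i} → ℝ) :=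
        LinearMap.finrank_le_finrank_of_injective hg
    _ = Fintype.card {i : Fin k // 0 < hA.eigenvalues i} := Module.finrank_pi ℝ
    _ = (Finset.univ.filter fun i => 0 < hA.eigenvalues i).card := Fintype.card_subtype _
    _ = posEigen A := by rw [posEigen, dif_pos hA]

theorem stmt6 {m n n₁ n₂ : ℕ} (P : Matrix (Fin m) (Fin m) ℝ) (hP : P.IsHermitian)
    (S : Matrix (Fin m) (Fin n) ℝ)
    (X : Matrix (Fin (n₁ + n₂)) (Fin m) ℝ) (hX : X.rank = n₁ + n₂)
    (hn₁ : n₁ = posEigen P) (hn₂ : n₂ = negEigen P)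
    (hPX : P = Xᵀ *
      (Matrix.of fun i j : Fin (n₁ + n₂) => if i = j then
          (if (i : ℕ) < n₁ then (1 : ℝ) else -1) else 0) * X) :
    (Sᵀ * P).rank ≤ negEigen P + posEigen (Sᵀ * P * S) := by
  classical
  set Sg : Matrix (Fin (n₁ + n₂)) (Fin (n₁ + n₂)) ℝ :=
    Matrix.of fun i j : Fin (n₁ + n₂) => if i = j then
      (if (i : ℕ) < n₁ then (1 : ℝ) else -1) else 0 with hSg
  have hSgdiag : Sg = Matrix.diagonal (fun i : Fin (n₁ + n₂) =>
      if (i : ℕ) < n₁ then (1 : ℝ) else -1) := by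
    ext i j
    by_cases h : i = j <;> simp [hSg, Matrix.diagonal_apply, h]
  set Y : Matrix (Fin (n₁ + n₂)) (Fin n) ℝ := X * S with hY
  set A : Matrix (Fin n) (Fin n) ℝ := Sᵀ * P * S with hAdef
  have hA : A.IsHermitian := by
    have h := Matrix.isHermitian_conjTranspose_mul_mul S hP
    rwa [Matrix.conjTranspose_eq_transpose_of_trivial] at h
  have hAY : A = Yᵀ * Sg * Y := by
    rw [hAdef, hPX, hY, Matrix.transpose_mul]
    simp only [Matrix.mul_assoc]
  -- quadratic form identity
  have hquad : ∀ v : Fin n → ℝ, v ⬝ᵥ A.mulVec v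
      = ∑ i : Fin (n₁ + n₂), (if (i : ℕ) < n₁ then (1 : ℝ) else -1) * ((Y *ᵥ v) i * (Y *ᵥ v) i) := by
    intro v
    rw [hAY, hSgdiag, ← Matrix.mulVec_mulVec, ← Matrix.mulVec_mulVec,
      Matrix.dotProduct_mulVec, Matrix.vecMul_transpose]
    simp [dotProduct, Matrix.mulVec_diagonal]
  -- linear maps
  set L : (Fin n → ℝ) →ₗ[ℝ] (Fin (n₁ + n₂) → ℝ) := Y.mulVecLin with hL
  set L₂ : (Fin n → ℝ) →ₗ[ℝ] (Fin n₂ → ℝ) :=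
    (LinearMap.funLeft ℝ ℝ (Fin.natAdd n₁)).comp L with hL2
  set K : Submodule ℝ (Fin n → ℝ) := LinearMap.ker L₂ with hK
  set LK : K →ₗ[ℝ] (Fin (n₁ + n₂) → ℝ) := L.domRestrict K with hLK
  set K' : Submodule ℝ K := LinearMap.ker LK with hK'
  obtain ⟨U', hU'⟩ := K'.exists_isCompl
  set U : Submodule ℝ (Fin n → ℝ) := U'.map K.subtype with hU
  -- membership in K kills high coordinates
  have hKmem : ∀ v ∈ K, ∀ i : Fin (n₁ + n₂), ¬ (i : ℕ) < n₁ → (Y *ᵥ v) i = 0 := by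
    intro v hv i hi
    push_neg at hi
    have h2 := LinearMap.mem_ker.mp hv
    have hj : (i : ℕ) - n₁ < n₂ := by omega
    have := congrFun h2 ⟨(i : ℕ) - n₁, hj⟩
    simp only [hL2, LinearMap.comp_apply, LinearMap.funLeft_apply, Pi.zero_apply] at this
    have hi' : Fin.natAdd n₁ (⟨(i : ℕ) - n₁, hj⟩ : Fin n₂) = i := by
      apply Fin.ext; simp [Fin.natAdd]; omega
    rwa [hi'] at this
  -- positivity on U
  have hUpos : ∀ x ∈ U, x ≠ 0 → 0 < x ⬝ᵥ A.mulVec x := by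
    intro x hx hx0
    obtain ⟨u', hu', rfl⟩ := hx
    have hu'0 : u' ≠ 0 := fun h => hx0 (by simp [h])
    have hYx : Y *ᵥ (u' : Fin n → ℝ) ≠ 0 := by
      intro h
      have : u' ∈ K' := by
        rw [hK', LinearMap.mem_ker, hLK]
        exact h
      have : u' ∈ K' ⊓ U' := ⟨this, hu'⟩
      rw [hU'.inf_eq_bot] at this
      exact hu'0 this
    rw [hquad]
    obtain ⟨i0, hi0⟩ := Function.ne_iff.mp hYx
    have hi0lt : (i0 : ℕ) < n₁ := by
      by_contra h
      exact hi0 (hKmem u' u'.2 i0 h)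
    apply Finset.sum_pos'
    · intro i _
      by_cases h : (i : ℕ) < n₁
      · simp only [h, if_true, one_mul]; exact mul_self_nonneg _
      · simp [hKmem u' u'.2 i h]
    · refine ⟨i0, Finset.mem_univ _, ?_⟩
      have hz : (Y *ᵥ (u' : Fin n → ℝ)) i0 ≠ 0 := by simpa using hi0
      simp only [hi0lt, if_true, one_mul]
      exact mul_self_pos.mpr hz
  have hUrank : Module.finrank ℝ U ≤ posEigen A := pos_index_lemma A hA U hUpos
  -- rank chain
  have h1 : (Sᵀ * P).rank = (P * S).rank := by
    rw [← Matrix.rank_transpose (Sᵀ * P), Matrix.transpose_mul, Matrix.transpose_transpose]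
    congr 1
    rw [← Matrix.conjTranspose_eq_transpose_of_trivial, hP]
  have h2 : (P * S).rank ≤ Y.rank := by
    rw [hPX, hY, Matrix.mul_assoc, Matrix.mul_assoc]
    calc (Xᵀ * (Sg * (X * S))).rank ≤ (Sg * (X * S)).rank := Matrix.rank_mul_le_right _ _
      _ ≤ (X * S).rank := Matrix.rank_mul_le_right _ _
  have h3 : Y.rank = Module.finrank ℝ (LinearMap.range L) := rfl
  -- dimension counting
  obtain ⟨C, hC⟩ := K.exists_isCompl
  have e1 : Module.finrank ℝ (LinearMap.range L₂) + Module.finrank ℝ K = n := by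
    have := LinearMap.finrank_range_add_finrank_ker L₂
    rwa [Module.finrank_fin_fun] at this
  have e2 : Module.finrank ℝ (LinearMap.range LK) + Module.finrank ℝ K' =
      Module.finrank ℝ K := LinearMap.finrank_range_add_finrank_ker LK
  have e3 : Module.finrank ℝ K' + Module.finrank ℝ U' = Module.finrank ℝ K :=
    Submodule.finrank_add_eq_of_isCompl hU'
  have e4 : Module.finrank ℝ U = Module.finrank ℝ U' :=
    Submodule.finrank_map_subtype_eq K U'
  have e5 : Module.finrank ℝ K + Module.finrank ℝ C = n := by
    have := Submodule.finrank_add_eq_of_isCompl hC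
    rwa [Module.finrank_fin_fun] at this
  have e6 : Module.finrank ℝ (LinearMap.range L₂) ≤ n₂ := by
    have := Submodule.finrank_le (LinearMap.range L₂)
    rwa [Module.finrank_fin_fun] at this
  have e7 : Module.finrank ℝ (LinearMap.range L) ≤
      Module.finrank ℝ (K.map L) + Module.finrank ℝ C := by
    have hmap : LinearMap.range L = K.map L ⊔ C.map L := by
      rw [← Submodule.map_sup, hC.sup_eq_top, Submodule.map_top]
    rw [hmap]
    have hs := Submodule.finrank_sup_add_finrank_inf_eq (K.map L) (C.map L)
    have hm := Submodule.finrank_map_le L C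
    omega
  have e8 : K.map L = LinearMap.range LK := (LinearMap.range_domRestrict K L).symm
  rw [← hn₂, h1]
  have := h2
  rw [h3] at this
  rw [e8] at e7
  omega
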